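/- For every linear subspace V ⊆ ℝ^m and every w ∈ V^⊥ there exists exactly one character χ(V+w) of C_R(ℝ^m), i.e. exactly one nonzero continuous multiplicative linear functional χ : C_R(ℝ^m) → ℂ such that for every finite-dimensional subspace U ⊆ ℝ^m and every continuous function g on U vanishing at infinity: χ(g ∘ P_U) = g(P_U w) if V ⊆ U^⊥, and χ(g ∘ P_U) = 0 if V ⊄ U^⊥. -/

import Mathlib

open Filter Topology
open scoped BoundedContinuousFunction InnerProductSpace

noncomputable section

/-- `ℝ^m` with its standard inner product. -/
abbrev E (m : ℕ) : Type := EuclideanSpace ℝ (Fin m)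

/-- The resolvent functions `h^λ_x : y ↦ 1/(iλ - ⟨x,y⟩)`, as elements of `C_b(ℝ^m, ℂ)`. -/
def resolventFns (m : ℕ) : Set (E m →ᵇ ℂ) :=
  {f | ∃ (x : E m) (l : ℝ), l ≠ 0 ∧
    ∀ y : E m, f y = (Complex.I * (l : ℂ) - ((⟪x, y⟫_ℝ : ℝ) : ℂ))⁻¹}

/-- The commutative resolvent algebra: the smallest closed star-subalgebra of
`C_b(ℝ^m, ℂ)` containing all the functions `h^λ_x`. -/
def CR (m : ℕ) : StarSubalgebra ℂ (E m →ᵇ ℂ) :=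
  (StarAlgebra.adjoin ℂ (resolventFns m)).topologicalClosure

/-- The distance of `f` to the set `S` in the sup norm, `inf {‖f - ξ‖_∞ : ξ ∈ S}`. -/
def qdist {m : ℕ} (S : Set (E m →ᵇ ℂ)) (f : E m →ᵇ ℂ) : ℝ :=
  sInf ((fun ξ => ‖f - ξ‖) '' S)

/-- The recursive filtration `C_r(ℝ^m)`: `C_0` consists of the continuous functions vanishing
at infinity; `C_{r+1}` consists of those bounded continuous `f` admitting a countable family
of levees `g_i ∘ P_i`, with pairwise distinct orthogonal projections `P_i` onto
`(m - (r+1))`-dimensional subspaces and `g_i ∈ C₀(ran P_i)`, summing unconditionally to `f`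
in the seminorm `‖·‖_r = qdist (Cfilt m r)`. -/
def Cfilt (m : ℕ) : ℕ → Set (E m →ᵇ ℂ)
  | 0 => {f | Tendsto f (cocompact (E m)) (𝓝 0)}
  | (r + 1) =>
    {f | ∃ (I : Set ℕ) (V : I → Submodule ℝ (E m)) (g : ∀ i : I, V i → ℂ)
        (F : I → (E m →ᵇ ℂ)),
      Function.Injective V ∧
      (∀ i, Module.finrank ℝ (V i) = m - (r + 1)) ∧
      (∀ i, Continuous (g i)) ∧
      (∀ i, Tendsto (g i) (cocompact _) (𝓝 0)) ∧
      (∀ (i : I) (y : E m), F i y = g i (Submodule.orthogonalProjectionOnto (V i) y)) ∧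
      Tendsto (fun s : Finset I => qdist (Cfilt m r) (f - ∑ i ∈ s, F i)) atTop (𝓝 0)}


/-- The defining property of the character `χ(V+w)` of `C_R(ℝ^m)`: on any levee `g ∘ P_U`
(with `U ⊆ ℝ^m` a subspace and `g ∈ C₀(U)`) it takes the value `g(P_U w)` if `V ⊆ U^⊥`,
and `0` otherwise. -/
def IsResolventChar (m : ℕ) (V : Submodule ℝ (E m)) (w : E m)
    (φ : ↥(CR m) → ℂ) : Prop :=
  ∀ (U : Submodule ℝ (E m)) (g : U → ℂ), Continuous g →
    Tendsto g (cocompact _) (𝓝 0) →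
    ∀ f : ↥(CR m), (∀ y : E m, (f : E m →ᵇ ℂ) y = g (Submodule.orthogonalProjectionOnto U y)) →
      (V ≤ Uᗮ → φ f = g (Submodule.orthogonalProjectionOnto U w)) ∧ (¬ V ≤ Uᗮ → φ f = 0)

/-! ### Auxiliary lemmas -/

lemma tendsto_cocompact_of_norm_atTop {α X : Type*} [NormedAddCommGroup X] {f : α → X}
    {l : Filter α} (h : Tendsto (fun a => ‖f a‖) l atTop) : Tendsto f l (cocompact X) := by
  rw [Filter.hasBasis_cocompact.tendsto_right_iff]
  intro K hK
  obtain ⟨R, hR⟩ := hK.isBounded.exists_norm_le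
  filter_upwards [h.eventually_gt_atTop R] with t ht
  exact fun hmem => absurd (hR _ hmem) (not_le.mpr ht)

lemma resolventFn_levee {m : ℕ} {f : E m →ᵇ ℂ} (x : E m) (l : ℝ) (hl : l ≠ 0)
    (hf : ∀ y : E m, f y = (Complex.I * (l : ℂ) - ((⟪x, y⟫_ℝ : ℝ) : ℂ))⁻¹) :
    ∃ (U : Submodule ℝ (E m)) (g : U → ℂ), Continuous g ∧
      Tendsto g (cocompact _) (𝓝 0) ∧
      ∀ y : E m, f y = g (Submodule.orthogonalProjectionOnto U y) := by
  by_cases hx : x = 0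
  · refine ⟨⊥, fun _ => (Complex.I * (l : ℂ))⁻¹, continuous_const, ?_, ?_⟩
    · haveI : CompactSpace (⊥ : Submodule ℝ (E m)) := Finite.compactSpace
      rw [Filter.cocompact_eq_bot]
      exact tendsto_bot
    · intro y
      rw [hf y, hx]
      simp
  · refine ⟨ℝ ∙ x, fun u => (Complex.I * (l : ℂ) - ((⟪x, (u : E m)⟫_ℝ : ℝ) : ℂ))⁻¹, ?_, ?_, ?_⟩
    · have hden : ∀ u : ↥(ℝ ∙ x), (Complex.I * (l : ℂ) - ((⟪x, (u : E m)⟫_ℝ : ℝ) : ℂ)) ≠ 0 := by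
        intro u h
        apply hl
        have := congrArg Complex.im h
        simpa using this
      refine Continuous.inv₀ ?_ hden
      exact continuous_const.sub
        (Complex.continuous_ofReal.comp (Continuous.inner continuous_const continuous_subtype_val))
    · have hinner : ∀ u : ↥(ℝ ∙ x), |⟪x, (u : E m)⟫_ℝ| = ‖x‖ * ‖(u : E m)‖ := by
        rintro ⟨u, hu⟩
        obtain ⟨c, rfl⟩ := Submodule.mem_span_singleton.mp hu
        rw [real_inner_smul_right, real_inner_self_eq_norm_sq, abs_mul,
          abs_of_nonneg (sq_nonneg ‖x‖), norm_smul, Real.norm_eq_abs]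
        ring
      have hx' : 0 < ‖x‖ := norm_pos_iff.mpr hx
      have hnorm : Tendsto (fun u : ↥(ℝ ∙ x) => ‖(u : E m)‖) (cocompact _) atTop :=
        tendsto_norm_cocompact_atTop (E := ↥(ℝ ∙ x))
      have hb : Tendsto (fun u : ↥(ℝ ∙ x) => (‖x‖ * ‖(u : E m)‖)⁻¹) (cocompact _) (𝓝 0) :=
        tendsto_inv_atTop_zero.comp (hnorm.const_mul_atTop hx')
      apply squeeze_zero_norm' _ hb
      filter_upwards [hnorm.eventually_ge_atTop 1] with u hu
      have h1 : |⟪x, (u : E m)⟫_ℝ| = ‖x‖ * ‖(u : E m)‖ := hinner u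
      have h2 : |⟪x, (u : E m)⟫_ℝ| ≤ ‖Complex.I * (l:ℂ) - ((⟪x, (u : E m)⟫_ℝ : ℝ) : ℂ)‖ := by
        have := Complex.abs_re_le_norm (Complex.I * (l:ℂ) - ((⟪x, (u : E m)⟫_ℝ : ℝ) : ℂ))
        simpa using this
      rw [norm_inv, ← h1]
      exact inv_anti₀ (by rw [h1]; exact mul_pos hx' (lt_of_lt_of_le zero_lt_one hu)) h2
    · intro y
      rw [hf y]
      congr 3
      have hxU : x ∈ (ℝ ∙ x) := Submodule.mem_span_singleton_self x
      have h0 : ⟪x, y - (Submodule.orthogonalProjectionOnto (ℝ ∙ x) y : E m)⟫_ℝ = 0 :=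
        (Submodule.mem_orthogonal _ _).mp (Submodule.sub_starProjection_mem_orthogonal y) x hxU
      rw [inner_sub_right, sub_eq_zero] at h0
      exact h0

def curve {m : ℕ} (V : Submodule ℝ (E m)) (w : E m) : ℝ → E m := fun t =>
  w + ∑ i : Fin (Module.finrank ℝ V), t ^ ((i : ℕ) + 1) • ((Module.finBasis ℝ V) i : E m)

lemma proj_curve_of_le {m : ℕ} {V U : Submodule ℝ (E m)} {w : E m} (h : V ≤ Uᗮ) (t : ℝ) :
    Submodule.orthogonalProjectionOnto U (curve V w t) = Submodule.orthogonalProjectionOnto U w := by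
  unfold curve
  rw [map_add, map_sum]
  have hz : ∀ i : Fin (Module.finrank ℝ V),
      Submodule.orthogonalProjectionOnto U (t ^ ((i : ℕ) + 1) • ((Module.finBasis ℝ V) i : E m)) = 0 := by
    intro i
    rw [map_smul, Submodule.orthogonalProjectionOnto_apply_of_mem_orthogonal
      (h (Module.finBasis ℝ V i).2), smul_zero]
  rw [Finset.sum_congr rfl (fun i _ => hz i)]
  simp

lemma proj_curve_cocompact {m : ℕ} {V U : Submodule ℝ (E m)} {w : E m} (h : ¬ V ≤ Uᗮ) :
    Tendsto (fun t => Submodule.orthogonalProjectionOnto U (curve V w t)) atTop (cocompact ↥U) := by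
  obtain ⟨v, hvV, hvU⟩ := SetLike.not_le_iff_exists.mp h
  set b := Module.finBasis ℝ V with hb
  set Pv : E m := (Submodule.orthogonalProjectionOnto U v : E m) with hPv
  have hPv0 : Pv ≠ 0 := by
    simp only [hPv, ne_eq, Submodule.coe_eq_zero]
    intro h0
    exact hvU (Submodule.orthogonalProjectionOnto_eq_zero_iff.mp h0)
  set a : Fin (Module.finrank ℝ V) → ℝ := fun i => ⟪Pv, ((b i : E m))⟫_ℝ with ha
  have hPvU : Pv ∈ U := (Submodule.orthogonalProjectionOnto U v).2
  have hinner_proj : ∀ z : E m, ⟪Pv, z⟫_ℝ = ⟪Pv, ((Submodule.orthogonalProjectionOnto U z : E m))⟫_ℝ := by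
    intro z
    have h0 : ⟪Pv, z - (Submodule.orthogonalProjectionOnto U z : E m)⟫_ℝ = 0 :=
      (Submodule.mem_orthogonal _ _).mp (Submodule.sub_starProjection_mem_orthogonal z) _ hPvU
    rw [inner_sub_right, sub_eq_zero] at h0; exact h0
  have hex : ∃ i, a i ≠ 0 := by
    by_contra hall
    push_neg at hall
    have hPvPv : ⟪Pv, v⟫_ℝ = 0 := by
      have hv'' : v = ∑ i, (b.repr ⟨v, hvV⟩) i • (b i : E m) := by
        conv_lhs => rw [show v = ((⟨v, hvV⟩ : V) : E m) from rfl,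
          (b.sum_repr ⟨v, hvV⟩).symm]
        push_cast
        rfl
      rw [hv'', inner_sum]
      refine Finset.sum_eq_zero fun i _ => ?_
      rw [real_inner_smul_right]
      have h0 : ⟪Pv, ((b i : E m))⟫_ℝ = 0 := hall i
      rw [h0, mul_zero]
    rw [hinner_proj v, ← hPv] at hPvPv
    exact hPv0 (inner_self_eq_zero.mp hPvPv)
  obtain ⟨i₀, hi₀⟩ := hex
  set q : Polynomial ℝ := Polynomial.C (⟪Pv, w⟫_ℝ) +
    ∑ i : Fin (Module.finrank ℝ V), Polynomial.C (a i) * Polynomial.X ^ ((i : ℕ) + 1) with hq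
  have heval : ∀ t, q.eval t = ⟪Pv, curve V w t⟫_ℝ := by
    intro t
    rw [hq]
    simp only [Polynomial.eval_add, Polynomial.eval_C, Polynomial.eval_finset_sum,
      Polynomial.eval_mul, Polynomial.eval_pow, Polynomial.eval_X, curve, inner_add_right,
      inner_sum, real_inner_smul_right]
    congr 1
    exact Finset.sum_congr rfl (fun i _ => by rw [ha, mul_comm])
  have hcoeff : q.coeff ((i₀ : ℕ) + 1) = a i₀ := by
    rw [hq, Polynomial.coeff_add, Polynomial.coeff_C, Polynomial.finset_sum_coeff]
    simp [Polynomial.coeff_C_mul, Polynomial.coeff_X_pow, Fin.val_inj]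
  have hdeg : 0 < q.degree :=
    lt_of_lt_of_le (by exact_mod_cast Nat.succ_pos (i₀ : ℕ))
      (Polynomial.le_degree_of_ne_zero (hcoeff ▸ hi₀))
  have habs : Tendsto (fun t => |q.eval t|) atTop atTop := Polynomial.abs_tendsto_atTop q hdeg
  have hPvpos : 0 < ‖Pv‖ := norm_pos_iff.mpr hPv0
  have hbound : ∀ t, |q.eval t| / ‖Pv‖ ≤ ‖Submodule.orthogonalProjectionOnto U (curve V w t)‖ := by
    intro t
    rw [heval, hinner_proj (curve V w t), div_le_iff₀ hPvpos]
    calc |⟪Pv, ((Submodule.orthogonalProjectionOnto U (curve V w t) : E m))⟫_ℝ|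
        ≤ ‖Pv‖ * ‖(Submodule.orthogonalProjectionOnto U (curve V w t) : E m)‖ := abs_real_inner_le_norm _ _
      _ = ‖Submodule.orthogonalProjectionOnto U (curve V w t)‖ * ‖Pv‖ := by rw [mul_comm]; rfl
  apply tendsto_cocompact_of_norm_atTop
  exact tendsto_atTop_mono hbound (habs.atTop_div_const hPvpos)

/-! ### The ultrafilter character -/

def UF : Ultrafilter ℝ := Ultrafilter.of atTop

lemma UF_le : (UF : Filter ℝ) ≤ atTop := Ultrafilter.of_le _

def chiFun {m : ℕ} (V : Submodule ℝ (E m)) (w : E m) (f : E m →ᵇ ℂ) : ℂ :=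
  limUnder (UF : Filter ℝ) (fun t => f (curve V w t))

lemma tendsto_chiFun {m : ℕ} (V : Submodule ℝ (E m)) (w : E m) (f : E m →ᵇ ℂ) :
    Tendsto (fun t => f (curve V w t)) (UF : Filter ℝ) (𝓝 (chiFun V w f)) := by
  have hprin : (UF.map (fun t => f (curve V w t)) : Filter ℂ) ≤ 𝓟 (Metric.closedBall 0 ‖f‖) := by
    rw [Ultrafilter.coe_map, le_principal_iff, mem_map]
    refine Filter.univ_mem' fun t => ?_
    simp only [Set.mem_preimage, Metric.mem_closedBall, dist_zero_right]
    exact f.norm_coe_le_norm _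
  obtain ⟨c, -, hc⟩ := (isCompact_closedBall (0:ℂ) ‖f‖).ultrafilter_le_nhds
      (UF.map (fun t => f (curve V w t))) hprin
  have hc' : Tendsto (fun t => f (curve V w t)) (UF : Filter ℝ) (𝓝 c) := hc
  rw [chiFun, hc'.limUnder_eq]
  exact hc'

def chiLM (m : ℕ) (V : Submodule ℝ (E m)) (w : E m) : ↥(CR m) →ₗ[ℂ] ℂ where
  toFun f := chiFun V w ↑f
  map_add' f g := by
    refine Filter.Tendsto.limUnder_eq ?_
    have h := (tendsto_chiFun V w (f : E m →ᵇ ℂ)).add (tendsto_chiFun V w (g : E m →ᵇ ℂ))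
    refine h.congr fun t => ?_
    simp
  map_smul' c f := by
    refine Filter.Tendsto.limUnder_eq ?_
    have h := (tendsto_chiFun V w (f : E m →ᵇ ℂ)).const_smul c
    refine h.congr fun t => ?_
    simp

lemma chiLM_bound (m : ℕ) (V : Submodule ℝ (E m)) (w : E m) (f : ↥(CR m)) :
    ‖chiLM m V w f‖ ≤ 1 * ‖f‖ := by
  rw [one_mul]
  refine le_of_tendsto (tendsto_chiFun V w (f : E m →ᵇ ℂ)).norm ?_
  exact Filter.univ_mem' fun t => (f : E m →ᵇ ℂ).norm_coe_le_norm _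

def chiCLM (m : ℕ) (V : Submodule ℝ (E m)) (w : E m) : ↥(CR m) →L[ℂ] ℂ :=
  LinearMap.mkContinuous (chiLM m V w) 1 (chiLM_bound m V w)

lemma chiCLM_apply (m : ℕ) (V : Submodule ℝ (E m)) (w : E m) (f : ↥(CR m)) :
    chiCLM m V w f = chiFun V w ↑f := rfl

lemma chiCLM_one (m : ℕ) (V : Submodule ℝ (E m)) (w : E m) : chiCLM m V w 1 = 1 := by
  rw [chiCLM_apply]
  refine Filter.Tendsto.limUnder_eq ?_
  refine tendsto_const_nhds.congr fun t => ?_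
  simp

lemma chiCLM_mul (m : ℕ) (V : Submodule ℝ (E m)) (w : E m) (f g : ↥(CR m)) :
    chiCLM m V w (f * g) = chiCLM m V w f * chiCLM m V w g := by
  simp only [chiCLM_apply]
  refine Filter.Tendsto.limUnder_eq ?_
  have h := (tendsto_chiFun V w (f : E m →ᵇ ℂ)).mul (tendsto_chiFun V w (g : E m →ᵇ ℂ))
  refine h.congr fun t => ?_
  simp

def chiChar (m : ℕ) (V : Submodule ℝ (E m)) (w : E m) : WeakDual.characterSpace ℂ (CR m) :=
  ⟨StrongDual.toWeakDual (chiCLM m V w), by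
    constructor
    · intro h
      have h1 := congrArg (fun ψ : WeakDual ℂ ↥(CR m) => ψ 1) h
      change (StrongDual.toWeakDual (chiCLM m V w)) 1 = (0 : WeakDual ℂ ↥(CR m)) 1 at h1
      rw [show (StrongDual.toWeakDual (chiCLM m V w)) 1 = chiCLM m V w 1 from rfl,
        chiCLM_one] at h1
      rw [show ((0 : WeakDual ℂ ↥(CR m))) (1 : ↥(CR m)) = 0 from rfl] at h1
      exact one_ne_zero h1
    · intro x y
      exact chiCLM_mul m V w x y⟩

lemma chiChar_apply (m : ℕ) (V : Submodule ℝ (E m)) (w : E m) (f : ↥(CR m)) :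
    ((chiChar m V w : WeakDual ℂ (CR m))) f = chiFun V w ↑f := rfl

lemma chiChar_isResolventChar (m : ℕ) (V : Submodule ℝ (E m)) (w : E m) :
    IsResolventChar m V w (fun a => (chiChar m V w : WeakDual ℂ (CR m)) a) := by
  intro U g hgc hg0 f hf
  constructor
  · intro hVU
    show chiFun V w ↑f = _
    refine Filter.Tendsto.limUnder_eq ?_
    refine tendsto_const_nhds.congr fun t => ?_
    rw [hf (curve V w t), proj_curve_of_le hVU]
  · intro hVU
    show chiFun V w ↑f = _
    refine Filter.Tendsto.limUnder_eq ?_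
    have h := (hg0.comp (proj_curve_cocompact (w := w) hVU)).mono_left UF_le
    exact h.congr fun t => (hf (curve V w t)).symm

lemma memCR_of_adjoin {m : ℕ} {x : E m →ᵇ ℂ}
    (hx : x ∈ Algebra.adjoin ℂ (resolventFns m ∪ star (resolventFns m))) : x ∈ CR m :=
  (StarSubalgebra.le_topologicalClosure _)
    (show x ∈ StarAlgebra.adjoin ℂ (resolventFns m) from hx)

lemma star_mem_resolventFns {m : ℕ} {x : E m →ᵇ ℂ} (hx : x ∈ star (resolventFns m)) :
    x ∈ resolventFns m := by
  rw [Set.mem_star] at hx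
  obtain ⟨x₀, l, hl, hfe⟩ := hx
  refine ⟨x₀, -l, neg_ne_zero.mpr hl, fun y => ?_⟩
  have h1 : x y = star ((star x) y) := by simp
  rw [h1, hfe y]
  rw [Complex.star_def, map_inv₀]
  congr 1
  simp only [map_sub, map_mul, Complex.conj_I, Complex.conj_ofReal]
  push_cast
  ring

lemma char_eq_on_resolventFn {m : ℕ} (V : Submodule ℝ (E m)) (w : E m)
    (φ ψ : WeakDual.characterSpace ℂ (CR m))
    (hφ : IsResolventChar m V w (fun a => (φ : WeakDual ℂ (CR m)) a))
    (hψ : IsResolventChar m V w (fun a => (ψ : WeakDual ℂ (CR m)) a))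
    {x : E m →ᵇ ℂ} (hx : x ∈ resolventFns m) (hc : x ∈ CR m) :
    (φ : WeakDual ℂ (CR m)) ⟨x, hc⟩ = (ψ : WeakDual ℂ (CR m)) ⟨x, hc⟩ := by
  obtain ⟨x₀, l, hl, hfe⟩ := hx
  obtain ⟨U, g, hgc, hg0, hlev⟩ := resolventFn_levee x₀ l hl hfe
  have h1 := hφ U g hgc hg0 ⟨x, hc⟩ (fun y => hlev y)
  have h2 := hψ U g hgc hg0 ⟨x, hc⟩ (fun y => hlev y)
  by_cases hVU : V ≤ Uᗮ
  · exact (h1.1 hVU).trans (h2.1 hVU).symm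
  · exact (h1.2 hVU).trans (h2.2 hVU).symm

set_option maxHeartbeats 1000000 in
lemma char_unique {m : ℕ} (V : Submodule ℝ (E m)) (w : E m)
    (φ ψ : WeakDual.characterSpace ℂ (CR m))
    (hφ : IsResolventChar m V w (fun a => (φ : WeakDual ℂ (CR m)) a))
    (hψ : IsResolventChar m V w (fun a => (ψ : WeakDual ℂ (CR m)) a)) : φ = ψ := by
  have hadj : ∀ (x : E m →ᵇ ℂ),
      x ∈ Algebra.adjoin ℂ (resolventFns m ∪ star (resolventFns m)) →
      ∀ hc : x ∈ CR m,
        (φ : WeakDual ℂ (CR m)) ⟨x, hc⟩ = (ψ : WeakDual ℂ (CR m)) ⟨x, hc⟩ := by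
    intro x hx
    refine Algebra.adjoin_induction
      (p := fun x _ => ∀ hc : x ∈ CR m,
        (φ : WeakDual ℂ (CR m)) ⟨x, hc⟩ = (ψ : WeakDual ℂ (CR m)) ⟨x, hc⟩)
      ?_ ?_ ?_ ?_ hx
    · intro z hz hc
      have hz' : z ∈ resolventFns m := hz.elim id star_mem_resolventFns
      exact char_eq_on_resolventFn V w φ ψ hφ hψ hz' hc
    · intro r hc
      have h1 : (⟨algebraMap ℂ (E m →ᵇ ℂ) r, hc⟩ : ↥(CR m)) = algebraMap ℂ ↥(CR m) r := rfl
      rw [h1]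
      have hφ1 : (φ : WeakDual ℂ (CR m)) (algebraMap ℂ ↥(CR m) r) = algebraMap ℂ ℂ r :=
        AlgHomClass.commutes φ r
      have hψ1 : (ψ : WeakDual ℂ (CR m)) (algebraMap ℂ ↥(CR m) r) = algebraMap ℂ ℂ r :=
        AlgHomClass.commutes ψ r
      rw [hφ1, hψ1]
    · intro z y hz hy ihz ihy hc
      have hzc : z ∈ CR m := memCR_of_adjoin hz
      have hyc : y ∈ CR m := memCR_of_adjoin hy
      have h1 : (⟨z + y, hc⟩ : ↥(CR m)) = ⟨z, hzc⟩ + ⟨y, hyc⟩ := rfl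
      rw [h1, map_add, map_add, ihz hzc, ihy hyc]
    · intro z y hz hy ihz ihy hc
      have hzc : z ∈ CR m := memCR_of_adjoin hz
      have hyc : y ∈ CR m := memCR_of_adjoin hy
      have h1 : (⟨z * y, hc⟩ : ↥(CR m)) = ⟨z, hzc⟩ * ⟨y, hyc⟩ := rfl
      rw [h1, φ.prop.2, ψ.prop.2, ihz hzc, ihy hyc]
  have key : ∀ f : ↥(CR m), (φ : WeakDual ℂ (CR m)) f = (ψ : WeakDual ℂ (CR m)) f := by
    intro f
    set Cφ := ‖WeakDual.toStrongDual (φ : WeakDual ℂ (CR m))‖ with hCφ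
    set Cψ := ‖WeakDual.toStrongDual (ψ : WeakDual ℂ (CR m))‖ with hCψ
    have hcl : (f : E m →ᵇ ℂ) ∈
        closure ((StarAlgebra.adjoin ℂ (resolventFns m) : Set (E m →ᵇ ℂ))) := by
      have h2 : (f : E m →ᵇ ℂ) ∈ ((CR m) : Set (E m →ᵇ ℂ)) := f.2
      exact (Set.ext_iff.mp
        (StarSubalgebra.topologicalClosure_coe (StarAlgebra.adjoin ℂ (resolventFns m))) _).mp h2
    by_contra hne
    set δ := ‖(φ : WeakDual ℂ (CR m)) f - (ψ : WeakDual ℂ (CR m)) f‖ with hδ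
    have hpos : 0 < δ := by
      rw [hδ, norm_pos_iff, sub_ne_zero]; exact hne
    have hCpos : 0 < Cφ + Cψ + 1 := by positivity
    obtain ⟨gg, hggmem, hggdist⟩ :=
      Metric.mem_closure_iff.mp hcl (δ / (Cφ + Cψ + 1)) (by positivity)
    have hggCR : gg ∈ CR m :=
      (StarSubalgebra.le_topologicalClosure _) hggmem
    set G : ↥(CR m) := ⟨gg, hggCR⟩ with hG
    have hGeq : (φ : WeakDual ℂ (CR m)) G = (ψ : WeakDual ℂ (CR m)) G :=
      hadj gg hggmem hggCR
    have hsub : ‖f - G‖ < δ / (Cφ + Cψ + 1) := by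
      have heq : ‖f - G‖ = dist (f : E m →ᵇ ℂ) gg := by rw [dist_eq_norm]; rfl
      rw [heq]; exact hggdist
    have hφb : ‖(φ : WeakDual ℂ (CR m)) (f - G)‖ ≤ Cφ * ‖f - G‖ :=
      (WeakDual.toStrongDual ((φ : WeakDual ℂ (CR m)))).le_opNorm (f - G)
    have hψb : ‖(ψ : WeakDual ℂ (CR m)) (f - G)‖ ≤ Cψ * ‖f - G‖ :=
      (WeakDual.toStrongDual ((ψ : WeakDual ℂ (CR m)))).le_opNorm (f - G)
    have heq2 : (φ : WeakDual ℂ (CR m)) f - (ψ : WeakDual ℂ (CR m)) f =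
        (φ : WeakDual ℂ (CR m)) (f - G) - (ψ : WeakDual ℂ (CR m)) (f - G) := by
      rw [map_sub, map_sub, hGeq]; ring
    have hlt : δ < δ := by
      calc δ = ‖(φ : WeakDual ℂ (CR m)) (f - G) - (ψ : WeakDual ℂ (CR m)) (f - G)‖ := by
            rw [hδ, heq2]
        _ ≤ ‖(φ : WeakDual ℂ (CR m)) (f - G)‖ + ‖(ψ : WeakDual ℂ (CR m)) (f - G)‖ :=
            norm_sub_le _ _
        _ ≤ Cφ * ‖f - G‖ + Cψ * ‖f - G‖ := add_le_add hφb hψb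
        _ = (Cφ + Cψ) * ‖f - G‖ := by ring
        _ ≤ (Cφ + Cψ + 1) * ‖f - G‖ := by
            apply mul_le_mul_of_nonneg_right _ (norm_nonneg _)
            linarith
        _ < (Cφ + Cψ + 1) * (δ / (Cφ + Cψ + 1)) := by
            exact mul_lt_mul_of_pos_left hsub hCpos
        _ = δ := by field_simp
    exact absurd hlt (lt_irrefl δ)
  exact Subtype.ext (DFunLike.ext _ _ key)


/-- for every linear subspace `V ⊆ ℝ^m` and every `w ∈ V^⊥` there is exactly one
character (nonzero continuous multiplicative linear functional) `χ(V+w)` of `C_R(ℝ^m)` taking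
the prescribed values on all levees. -/
theorem existsUnique_resolventChar (m : ℕ) (V : Submodule ℝ (E m)) (w : E m) (hw : w ∈ Vᗮ) :
    ∃! φ : WeakDual.characterSpace ℂ (CR m),
      IsResolventChar m V w (fun a => (φ : WeakDual ℂ (CR m)) a) := by
  exact ⟨chiChar m V w, chiChar_isResolventChar m V w,
    fun ψ hψ => char_unique V w ψ (chiChar m V w) hψ (chiChar_isResolventChar m V w)⟩
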